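/- Let n, m, l be natural numbers with n + m + l odd, and set P₁ := n² + m² + l² − 2nm − 2nl − 2ml. Then I_{n,m,l,3} = −(n+m−l−4)‼ · (n−m+l−4)‼ · (−n+m+l−4)‼ · (P₁³ − 8·P₁² + (16 − 48·n·m·l)·P₁ − 64·n·m·l·(n+m+l−3)), where the three double-factorial arguments are odd integers (possibly negative) and ‼ denotes the extended double factorial. -/

import Mathlib

open MeasureTheory Real

/-- Physicists' Hermite polynomials: `H 0 x = 1`, `H 1 x = 2x`,
`H (n+1) x = 2x * H n x - 2n * H (n-1) x`. -/
noncomputable def hermiteP : ℕ → ℝ → ℝ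
  | 0, _ => 1
  | 1, x => 2 * x
  | n + 2, x => 2 * x * hermiteP (n + 1) x - 2 * ((n : ℝ) + 1) * hermiteP n x

/-- Extended double factorial of an odd integer `a`:
`a‼ = 2^((a+1)/2) * Γ(a/2 + 1) / √π`. -/
noncomputable def ddfact (a : ℤ) : ℝ :=
  (2 : ℝ) ^ ((a + 1) / 2) * Real.Gamma ((a : ℝ) / 2 + 1) / Real.sqrt π

/-- `I n m l k = √(2/π) ∫ H_n(x) H_m(x) H_l(x) H_k(x) e^{-2x²}`. -/
noncomputable def I (n m l k : ℕ) : ℝ :=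
  Real.sqrt (2 / π) *
    ∫ x : ℝ,
      hermiteP n x * hermiteP m x * hermiteP l x * hermiteP k x * Real.exp (-2 * x ^ 2)

open Polynomial Filter

noncomputable def Hq : ℕ → Polynomial ℝ
  | 0 => 1
  | 1 => Polynomial.C 2 * Polynomial.X
  | n + 2 => Polynomial.C 2 * Polynomial.X * Hq (n + 1) - Polynomial.C (2 * ((n : ℝ) + 1)) * Hq n

lemma hermiteP_eq : ∀ (n : ℕ) (x : ℝ), hermiteP n x = (Hq n).eval x
  | 0, x => by simp [hermiteP, Hq]
  | 1, x => by simp [hermiteP, Hq]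
  | n + 2, x => by
      rw [hermiteP, Hq]
      simp [hermiteP_eq (n+1) x, hermiteP_eq n x]

lemma Hq_succ (n : ℕ) :
    Polynomial.C 2 * Polynomial.X * Hq n = Hq (n + 1) + Polynomial.C (2 * (n : ℝ)) * Hq (n - 1) := by
  cases n with
  | zero => simp [Hq]
  | succ n => rw [show n + 1 + 1 = n + 2 from rfl, Hq]; push_cast; ring

lemma Hq_deriv : ∀ n : ℕ, derivative (Hq n) = Polynomial.C (2 * (n : ℝ)) * Hq (n - 1)
  | 0 => by simp [Hq]
  | 1 => by simp [Hq]
  | n + 2 => by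
      have hC : Polynomial.C (2 * ((n:ℝ) + 2)) = Polynomial.C 2 + Polynomial.C (2 * ((n:ℝ)+1)) := by
        rw [← C_add]; ring_nf
      rw [Hq]
      simp only [derivative_sub, derivative_mul, derivative_C, derivative_X,
        Hq_deriv (n+1), Hq_deriv n]
      push_cast
      linear_combination (Polynomial.C (2 * ((n:ℝ) + 1))) * Hq_succ n - Hq (n+1) * hC

lemma int_pow_gauss (i : ℕ) : Integrable fun x : ℝ => x ^ i * Real.exp (-2 * x ^ 2) := by
  have h := integrable_rpow_mul_exp_neg_mul_sq (by norm_num : (0:ℝ) < 2)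
    (show (-1:ℝ) < (i:ℝ) from lt_of_lt_of_le (by norm_num) (Nat.cast_nonneg i))
  simpa [Real.rpow_natCast] using h

lemma int_poly (p : ℝ[X]) : Integrable fun x : ℝ => p.eval x * Real.exp (-2 * x ^ 2) := by
  induction p using Polynomial.induction_on' with
  | add p q hp hq => simpa [add_mul, Pi.add_def] using hp.add hq
  | monomial i a =>
      have := (int_pow_gauss i).const_mul a
      simpa [Polynomial.eval_monomial, mul_assoc] using this

lemma tend_top (p : ℝ[X]) :
    Tendsto (fun x : ℝ => p.eval x * Real.exp (-2 * x ^ 2)) atTop (nhds 0) := by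
  have hg : Tendsto (fun x : ℝ => ‖p.eval x / Real.exp x‖) atTop (nhds 0) := by
    simpa using p.tendsto_div_exp_atTop.norm
  apply squeeze_zero_norm' _ hg
  filter_upwards [eventually_ge_atTop (1:ℝ)] with x hx
  rw [norm_mul, norm_div, Real.norm_of_nonneg (Real.exp_pos _).le,
    Real.norm_of_nonneg (Real.exp_pos _).le, div_eq_mul_inv, ← Real.exp_neg]
  apply mul_le_mul_of_nonneg_left _ (norm_nonneg _)
  apply Real.exp_le_exp.2
  nlinarith

lemma tend_bot (p : ℝ[X]) :
    Tendsto (fun x : ℝ => p.eval x * Real.exp (-2 * x ^ 2)) atBot (nhds 0) := by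
  have h := (tend_top (p.comp (-Polynomial.X))).comp tendsto_neg_atBot_atTop
  apply h.congr
  intro x
  simp [Function.comp, Polynomial.eval_comp]

lemma integral_d_zero (p : ℝ[X]) :
    ∫ x : ℝ, ((derivative p).eval x - 4 * x * p.eval x) * Real.exp (-2 * x ^ 2) = 0 := by
  set f : ℝ → ℝ := fun x => p.eval x * Real.exp (-2 * x ^ 2) with hf
  set f' : ℝ → ℝ := fun x => ((derivative p).eval x - 4 * x * p.eval x) * Real.exp (-2 * x ^ 2)
    with hf'
  have hd : ∀ x : ℝ, HasDerivAt f (f' x) x := by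
    intro x
    have h1 : HasDerivAt (fun y : ℝ => p.eval y) ((derivative p).eval x) x := p.hasDerivAt x
    have h2 : HasDerivAt (fun y : ℝ => Real.exp (-2 * y ^ 2)) ((-4 * x) * Real.exp (-2 * x ^ 2)) x := by
      have h3 : HasDerivAt (fun y : ℝ => -2 * y ^ 2) (-4 * x) x := by
        have h4 := (hasDerivAt_pow 2 x).const_mul (-2 : ℝ)
        refine h4.congr_deriv ?_
        norm_num
        ring
      simpa [mul_comm] using h3.exp
    have h5 := h1.mul h2
    refine h5.congr_deriv ?_
    simp only [hf']
    ring
  have hint : Integrable f' := by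
    have h := int_poly (derivative p - Polynomial.C 4 * Polynomial.X * p)
    apply h.congr
    filter_upwards with x
    simp only [Polynomial.eval_sub, Polynomial.eval_mul, Polynomial.eval_C, Polynomial.eval_X, hf']
  have h1 : ∫ x in Set.Ioi (0:ℝ), f' x = 0 - f 0 :=
    integral_Ioi_of_hasDerivAt_of_tendsto' (fun x _ => hd x) hint.integrableOn (tend_top p)
  have h2 : ∫ x in Set.Iic (0:ℝ), f' x = f 0 - 0 :=
    integral_Iic_of_hasDerivAt_of_tendsto' (fun x _ => hd x) hint.integrableOn (tend_bot p)
  have h3 := intervalIntegral.integral_Iic_add_Ioi (b := (0:ℝ)) (f := f') (μ := volume)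
    hint.integrableOn hint.integrableOn
  rw [← h3, h1, h2]
  ring

noncomputable def J (n m l k : ℕ) : ℝ :=
  ∫ x : ℝ, (Hq n * Hq m * Hq l * Hq k).eval x * Real.exp (-2 * x ^ 2)

lemma I_eq_J (n m l k : ℕ) : I n m l k = Real.sqrt (2 / π) * J n m l k := by
  unfold I J
  congr 1
  congr 1
  funext x
  simp [hermiteP_eq, Polynomial.eval_mul]

lemma Jrec (n m l k : ℕ) :
    J (n+1) m l k = m * J n (m-1) l k + l * J n m (l-1) k + k * J n m l (k-1)
      - n * J (n-1) m l k := by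
  have h0 := integral_d_zero (Hq n * Hq m * Hq l * Hq k)
  have hp : derivative (Hq n * Hq m * Hq l * Hq k)
        - Polynomial.C 4 * Polynomial.X * (Hq n * Hq m * Hq l * Hq k)
      = Polynomial.C (2*(m:ℝ)) * (Hq n * Hq (m-1) * Hq l * Hq k)
      + Polynomial.C (2*(l:ℝ)) * (Hq n * Hq m * Hq (l-1) * Hq k)
      + Polynomial.C (2*(k:ℝ)) * (Hq n * Hq m * Hq l * Hq (k-1))
      - Polynomial.C (2*(n:ℝ)) * (Hq (n-1) * Hq m * Hq l * Hq k)
      - Polynomial.C 2 * (Hq (n+1) * Hq m * Hq l * Hq k) := by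
    have hs := Hq_succ n
    simp only [C_mul, map_ofNat] at hs
    simp only [derivative_mul, Hq_deriv, C_mul, map_ofNat]
    linear_combination (-(Hq m * Hq l * Hq k * 2)) * hs
  have h1 : (fun x : ℝ => ((derivative (Hq n * Hq m * Hq l * Hq k)).eval x
        - 4 * x * (Hq n * Hq m * Hq l * Hq k).eval x) * Real.exp (-2 * x ^ 2))
      = fun x : ℝ =>
        2*(m:ℝ) * ((Hq n * Hq (m-1) * Hq l * Hq k).eval x * Real.exp (-2 * x ^ 2))
      + 2*(l:ℝ) * ((Hq n * Hq m * Hq (l-1) * Hq k).eval x * Real.exp (-2 * x ^ 2))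
      + 2*(k:ℝ) * ((Hq n * Hq m * Hq l * Hq (k-1)).eval x * Real.exp (-2 * x ^ 2))
      - 2*(n:ℝ) * ((Hq (n-1) * Hq m * Hq l * Hq k).eval x * Real.exp (-2 * x ^ 2))
      - 2 * ((Hq (n+1) * Hq m * Hq l * Hq k).eval x * Real.exp (-2 * x ^ 2)) := by
    funext x
    have h2 := congrArg (fun q : Polynomial ℝ => q.eval x) hp
    simp only [Polynomial.eval_sub, Polynomial.eval_add, Polynomial.eval_mul, Polynomial.eval_C,
      Polynomial.eval_X] at h2
    simp only [Polynomial.eval_mul]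
    linear_combination (Real.exp (-2 * x ^ 2)) * h2
  rw [h1] at h0
  have iA := int_poly (Hq n * Hq (m-1) * Hq l * Hq k)
  have iB := int_poly (Hq n * Hq m * Hq (l-1) * Hq k)
  have iC := int_poly (Hq n * Hq m * Hq l * Hq (k-1))
  have iD := int_poly (Hq (n-1) * Hq m * Hq l * Hq k)
  have iT := int_poly (Hq (n+1) * Hq m * Hq l * Hq k)
  have i1 : Integrable (fun x : ℝ =>
      2*(m:ℝ) * ((Hq n * Hq (m-1) * Hq l * Hq k).eval x * Real.exp (-2 * x ^ 2))) :=
    iA.const_mul _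
  have i2 : Integrable (fun x : ℝ =>
      2*(l:ℝ) * ((Hq n * Hq m * Hq (l-1) * Hq k).eval x * Real.exp (-2 * x ^ 2))) :=
    iB.const_mul _
  have i3 : Integrable (fun x : ℝ =>
      2*(k:ℝ) * ((Hq n * Hq m * Hq l * Hq (k-1)).eval x * Real.exp (-2 * x ^ 2))) :=
    iC.const_mul _
  have i4 : Integrable (fun x : ℝ =>
      2*(n:ℝ) * ((Hq (n-1) * Hq m * Hq l * Hq k).eval x * Real.exp (-2 * x ^ 2))) :=
    iD.const_mul _
  have i5 : Integrable (fun x : ℝ =>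
      2 * ((Hq (n+1) * Hq m * Hq l * Hq k).eval x * Real.exp (-2 * x ^ 2))) :=
    iT.const_mul _
  have j2 : Integrable (fun x : ℝ => 2*(m:ℝ) * ((Hq n * Hq (m-1) * Hq l * Hq k).eval x * Real.exp (-2 * x ^ 2)) + 2*(l:ℝ) * ((Hq n * Hq m * Hq (l-1) * Hq k).eval x * Real.exp (-2 * x ^ 2))) := i1.add i2
  have j3 : Integrable (fun x : ℝ => 2*(m:ℝ) * ((Hq n * Hq (m-1) * Hq l * Hq k).eval x * Real.exp (-2 * x ^ 2)) + 2*(l:ℝ) * ((Hq n * Hq m * Hq (l-1) * Hq k).eval x * Real.exp (-2 * x ^ 2)) + 2*(k:ℝ) * ((Hq n * Hq m * Hq l * Hq (k-1)).eval x * Real.exp (-2 * x ^ 2))) := j2.add i3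
  have j4 : Integrable (fun x : ℝ => 2*(m:ℝ) * ((Hq n * Hq (m-1) * Hq l * Hq k).eval x * Real.exp (-2 * x ^ 2)) + 2*(l:ℝ) * ((Hq n * Hq m * Hq (l-1) * Hq k).eval x * Real.exp (-2 * x ^ 2)) + 2*(k:ℝ) * ((Hq n * Hq m * Hq l * Hq (k-1)).eval x * Real.exp (-2 * x ^ 2)) - 2*(n:ℝ) * ((Hq (n-1) * Hq m * Hq l * Hq k).eval x * Real.exp (-2 * x ^ 2))) := j3.sub i4
  have e1 : (∫ x : ℝ, (2*(m:ℝ) * ((Hq n * Hq (m-1) * Hq l * Hq k).eval x * Real.exp (-2 * x ^ 2)) + 2*(l:ℝ) * ((Hq n * Hq m * Hq (l-1) * Hq k).eval x * Real.exp (-2 * x ^ 2)) + 2*(k:ℝ) * ((Hq n * Hq m * Hq l * Hq (k-1)).eval x * Real.exp (-2 * x ^ 2)) - 2*(n:ℝ) * ((Hq (n-1) * Hq m * Hq l * Hq k).eval x * Real.exp (-2 * x ^ 2)) - 2 * ((Hq (n+1) * Hq m * Hq l * Hq k).eval x * Real.exp (-2 * x ^ 2)))) =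
      (∫ x : ℝ, (2*(m:ℝ) * ((Hq n * Hq (m-1) * Hq l * Hq k).eval x * Real.exp (-2 * x ^ 2)) + 2*(l:ℝ) * ((Hq n * Hq m * Hq (l-1) * Hq k).eval x * Real.exp (-2 * x ^ 2)) + 2*(k:ℝ) * ((Hq n * Hq m * Hq l * Hq (k-1)).eval x * Real.exp (-2 * x ^ 2)) - 2*(n:ℝ) * ((Hq (n-1) * Hq m * Hq l * Hq k).eval x * Real.exp (-2 * x ^ 2)))) - ∫ x : ℝ, 2 * ((Hq (n+1) * Hq m * Hq l * Hq k).eval x * Real.exp (-2 * x ^ 2)) := integral_sub j4 i5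
  have e2 : (∫ x : ℝ, (2*(m:ℝ) * ((Hq n * Hq (m-1) * Hq l * Hq k).eval x * Real.exp (-2 * x ^ 2)) + 2*(l:ℝ) * ((Hq n * Hq m * Hq (l-1) * Hq k).eval x * Real.exp (-2 * x ^ 2)) + 2*(k:ℝ) * ((Hq n * Hq m * Hq l * Hq (k-1)).eval x * Real.exp (-2 * x ^ 2)) - 2*(n:ℝ) * ((Hq (n-1) * Hq m * Hq l * Hq k).eval x * Real.exp (-2 * x ^ 2)))) =
      (∫ x : ℝ, (2*(m:ℝ) * ((Hq n * Hq (m-1) * Hq l * Hq k).eval x * Real.exp (-2 * x ^ 2)) + 2*(l:ℝ) * ((Hq n * Hq m * Hq (l-1) * Hq k).eval x * Real.exp (-2 * x ^ 2)) + 2*(k:ℝ) * ((Hq n * Hq m * Hq l * Hq (k-1)).eval x * Real.exp (-2 * x ^ 2)))) - ∫ x : ℝ, 2*(n:ℝ) * ((Hq (n-1) * Hq m * Hq l * Hq k).eval x * Real.exp (-2 * x ^ 2)) := integral_sub j3 i4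
  have e3 : (∫ x : ℝ, (2*(m:ℝ) * ((Hq n * Hq (m-1) * Hq l * Hq k).eval x * Real.exp (-2 * x ^ 2)) + 2*(l:ℝ) * ((Hq n * Hq m * Hq (l-1) * Hq k).eval x * Real.exp (-2 * x ^ 2)) + 2*(k:ℝ) * ((Hq n * Hq m * Hq l * Hq (k-1)).eval x * Real.exp (-2 * x ^ 2)))) =
      (∫ x : ℝ, (2*(m:ℝ) * ((Hq n * Hq (m-1) * Hq l * Hq k).eval x * Real.exp (-2 * x ^ 2)) + 2*(l:ℝ) * ((Hq n * Hq m * Hq (l-1) * Hq k).eval x * Real.exp (-2 * x ^ 2)))) + ∫ x : ℝ, 2*(k:ℝ) * ((Hq n * Hq m * Hq l * Hq (k-1)).eval x * Real.exp (-2 * x ^ 2)) := integral_add j2 i3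
  have e4 : (∫ x : ℝ, (2*(m:ℝ) * ((Hq n * Hq (m-1) * Hq l * Hq k).eval x * Real.exp (-2 * x ^ 2)) + 2*(l:ℝ) * ((Hq n * Hq m * Hq (l-1) * Hq k).eval x * Real.exp (-2 * x ^ 2)))) = (∫ x : ℝ, 2*(m:ℝ) * ((Hq n * Hq (m-1) * Hq l * Hq k).eval x * Real.exp (-2 * x ^ 2))) + ∫ x : ℝ, 2*(l:ℝ) * ((Hq n * Hq m * Hq (l-1) * Hq k).eval x * Real.exp (-2 * x ^ 2)) := integral_add i1 i2
  have e5 : (∫ x : ℝ, 2*(m:ℝ) * ((Hq n * Hq (m-1) * Hq l * Hq k).eval x * Real.exp (-2 * x ^ 2))) = 2*(m:ℝ) * ∫ x : ℝ, (Hq n * Hq (m-1) * Hq l * Hq k).eval x * Real.exp (-2 * x ^ 2) := integral_const_mul _ _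
  have e6 : (∫ x : ℝ, 2*(l:ℝ) * ((Hq n * Hq m * Hq (l-1) * Hq k).eval x * Real.exp (-2 * x ^ 2))) = 2*(l:ℝ) * ∫ x : ℝ, (Hq n * Hq m * Hq (l-1) * Hq k).eval x * Real.exp (-2 * x ^ 2) := integral_const_mul _ _
  have e7 : (∫ x : ℝ, 2*(k:ℝ) * ((Hq n * Hq m * Hq l * Hq (k-1)).eval x * Real.exp (-2 * x ^ 2))) = 2*(k:ℝ) * ∫ x : ℝ, (Hq n * Hq m * Hq l * Hq (k-1)).eval x * Real.exp (-2 * x ^ 2) := integral_const_mul _ _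
  have e8 : (∫ x : ℝ, 2*(n:ℝ) * ((Hq (n-1) * Hq m * Hq l * Hq k).eval x * Real.exp (-2 * x ^ 2))) = 2*(n:ℝ) * ∫ x : ℝ, (Hq (n-1) * Hq m * Hq l * Hq k).eval x * Real.exp (-2 * x ^ 2) := integral_const_mul _ _
  have e9 : (∫ x : ℝ, 2 * ((Hq (n+1) * Hq m * Hq l * Hq k).eval x * Real.exp (-2 * x ^ 2))) = 2 * ∫ x : ℝ, (Hq (n+1) * Hq m * Hq l * Hq k).eval x * Real.exp (-2 * x ^ 2) := integral_const_mul _ _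
  rw [e1, e2, e3, e4, e5, e6, e7, e8, e9] at h0
  unfold J
  linarith

lemma Irec (n m l k : ℕ) :
    I (n+1) m l k = m * I n (m-1) l k + l * I n m (l-1) k + k * I n m l (k-1)
      - n * I (n-1) m l k := by
  simp only [I_eq_J]
  rw [Jrec]
  ring

lemma Isym12 (n m l k : ℕ) : I n m l k = I m n l k := by
  unfold I; congr 1; congr 1; funext x; ring

lemma Isym13 (n m l k : ℕ) : I n m l k = I l m n k := by
  unfold I; congr 1; congr 1; funext x; ring

lemma Isym14 (n m l k : ℕ) : I n m l k = I k m l n := by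
  unfold I; congr 1; congr 1; funext x; ring

lemma Ibase : I 0 0 0 0 = 1 := by
  have h : (fun x : ℝ => hermiteP 0 x * hermiteP 0 x * hermiteP 0 x * hermiteP 0 x
      * Real.exp (-2 * x ^ 2)) = fun x : ℝ => Real.exp (-2 * x ^ 2) := by
    funext x; simp [hermiteP]
  rw [I, h, integral_gaussian, ← Real.sqrt_mul (by positivity),
    show (2 / π) * (π / 2) = 1 by field_simp, Real.sqrt_one]

lemma sqrtpi_ne : Real.sqrt π ≠ 0 := by positivity

lemma ddfact_step (t : ℤ) (h : Odd t) : ddfact (t + 2) = ((t:ℝ) + 2) * ddfact t := by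
  have h2 : ((t:ℝ)/2 + 1) ≠ 0 := by
    intro heq
    have ht : (t:ℝ) = -2 := by linarith
    have ht' : t = -2 := by exact_mod_cast ht
    rcases h with ⟨c, hc⟩; omega
  have he : (t + 2 + 1) / 2 = (t + 1)/2 + 1 := by
    rcases h with ⟨c, hc⟩; subst hc; omega
  unfold ddfact
  rw [he, zpow_add_one₀ (by norm_num : (2:ℝ) ≠ 0)]
  push_cast
  rw [show ((t:ℝ) + 2)/2 + 1 = ((t:ℝ)/2 + 1) + 1 by ring, Real.Gamma_add_one h2]
  ring

lemma ddfact_neg_one : ddfact (-1) = 1 := by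
  unfold ddfact
  norm_num
  rw [Real.Gamma_one_half_eq]
  exact div_self sqrtpi_ne

lemma ddfact_neg_three : ddfact (-3) = -1 := by
  have h := ddfact_step (-3) ⟨-2, by norm_num⟩
  norm_num [ddfact_neg_one] at h
  linarith

noncomputable def Pp (a b c : ℝ) : ℝ := a^2 + b^2 + c^2 - 2*a*b - 2*a*c - 2*b*c

noncomputable def Sp : ℕ → ℝ → ℝ → ℝ → ℝ
  | 0, _, _, _ => 1
  | 1, a, b, c => -(Pp a b c)
  | 2, a, b, c => (Pp a b c - 1)^2 - 16*a*b*c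
  | 3, a, b, c => -((Pp a b c)^3 - 8*(Pp a b c)^2 + (16 - 48*a*b*c)*(Pp a b c)
      - 64*a*b*c*(a+b+c-3))
  | _+4, _, _, _ => 0

noncomputable def G (k : ℕ) (n m l : ℤ) : ℝ :=
  ddfact (n + m - l - k - 1) * ddfact (n - m + l - k - 1) * ddfact (-n + m + l - k - 1) *
    Sp k (n:ℝ) (m:ℝ) (l:ℝ)

set_option maxHeartbeats 2000000 in
set_option maxHeartbeats 4000000 in
lemma Grec3 (n m l : ℤ) (hpar : Odd (n + m + l + 3)) :
    G 3 (n+1) m l = m * G 3 n (m-1) l + l * G 3 n m (l-1) + 3 * G 2 n m l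
      - n * G 3 (n-1) m l := by
  rw [Int.odd_iff] at hpar
  have hA : Odd (n + m - l - 5) := by rw [Int.odd_iff]; omega
  have hB : Odd (n - m + l - 5) := by rw [Int.odd_iff]; omega
  have hC : Odd (-n + m + l - 5) := by rw [Int.odd_iff]; omega
  unfold G
  rw [show (n + 1 + m - l - ((3:ℕ):ℤ) - 1 : ℤ) = (n + m - l - 5) + 2 by push_cast; ring]
  rw [show (n + 1 - m + l - ((3:ℕ):ℤ) - 1 : ℤ) = (n - m + l - 5) + 2 by push_cast; ring]
  rw [show (-(n + 1) + m + l - ((3:ℕ):ℤ) - 1 : ℤ) = -n + m + l - 5 by push_cast; ring]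
  rw [show (n + (m - 1) - l - ((3:ℕ):ℤ) - 1 : ℤ) = n + m - l - 5 by push_cast; ring]
  rw [show (n - (m - 1) + l - ((3:ℕ):ℤ) - 1 : ℤ) = (n - m + l - 5) + 2 by push_cast; ring]
  rw [show (-n + (m - 1) + l - ((3:ℕ):ℤ) - 1 : ℤ) = -n + m + l - 5 by push_cast; ring]
  rw [show (n + m - (l - 1) - ((3:ℕ):ℤ) - 1 : ℤ) = (n + m - l - 5) + 2 by push_cast; ring]
  rw [show (n - m + (l - 1) - ((3:ℕ):ℤ) - 1 : ℤ) = n - m + l - 5 by push_cast; ring]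
  rw [show (-n + m + (l - 1) - ((3:ℕ):ℤ) - 1 : ℤ) = -n + m + l - 5 by push_cast; ring]
  rw [show (n + m - l - ((2:ℕ):ℤ) - 1 : ℤ) = (n + m - l - 5) + 2 by push_cast; ring]
  rw [show (n - m + l - ((2:ℕ):ℤ) - 1 : ℤ) = (n - m + l - 5) + 2 by push_cast; ring]
  rw [show (-n + m + l - ((2:ℕ):ℤ) - 1 : ℤ) = (-n + m + l - 5) + 2 by push_cast; ring]
  rw [show (n - 1 + m - l - ((3:ℕ):ℤ) - 1 : ℤ) = n + m - l - 5 by push_cast; ring]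
  rw [show (n - 1 - m + l - ((3:ℕ):ℤ) - 1 : ℤ) = n - m + l - 5 by push_cast; ring]
  rw [show (-(n - 1) + m + l - ((3:ℕ):ℤ) - 1 : ℤ) = (-n + m + l - 5) + 2 by push_cast; ring]
  rw [ddfact_step _ hA, ddfact_step _ hB, ddfact_step _ hC]
  simp only [Sp, Pp]
  push_cast
  ring

set_option maxHeartbeats 4000000 in
lemma Grec2 (n m l : ℤ) (hpar : Odd (n + m + l + 2)) :
    G 2 (n+1) m l = m * G 2 n (m-1) l + l * G 2 n m (l-1) + 2 * G 1 n m l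
      - n * G 2 (n-1) m l := by
  rw [Int.odd_iff] at hpar
  have hA : Odd (n + m - l - 4) := by rw [Int.odd_iff]; omega
  have hB : Odd (n - m + l - 4) := by rw [Int.odd_iff]; omega
  have hC : Odd (-n + m + l - 4) := by rw [Int.odd_iff]; omega
  unfold G
  rw [show (n + 1 + m - l - ((2:ℕ):ℤ) - 1 : ℤ) = (n + m - l - 4) + 2 by push_cast; ring]
  rw [show (n + 1 - m + l - ((2:ℕ):ℤ) - 1 : ℤ) = (n - m + l - 4) + 2 by push_cast; ring]
  rw [show (-(n + 1) + m + l - ((2:ℕ):ℤ) - 1 : ℤ) = -n + m + l - 4 by push_cast; ring]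
  rw [show (n + (m - 1) - l - ((2:ℕ):ℤ) - 1 : ℤ) = n + m - l - 4 by push_cast; ring]
  rw [show (n - (m - 1) + l - ((2:ℕ):ℤ) - 1 : ℤ) = (n - m + l - 4) + 2 by push_cast; ring]
  rw [show (-n + (m - 1) + l - ((2:ℕ):ℤ) - 1 : ℤ) = -n + m + l - 4 by push_cast; ring]
  rw [show (n + m - (l - 1) - ((2:ℕ):ℤ) - 1 : ℤ) = (n + m - l - 4) + 2 by push_cast; ring]
  rw [show (n - m + (l - 1) - ((2:ℕ):ℤ) - 1 : ℤ) = n - m + l - 4 by push_cast; ring]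
  rw [show (-n + m + (l - 1) - ((2:ℕ):ℤ) - 1 : ℤ) = -n + m + l - 4 by push_cast; ring]
  rw [show (n + m - l - ((1:ℕ):ℤ) - 1 : ℤ) = (n + m - l - 4) + 2 by push_cast; ring]
  rw [show (n - m + l - ((1:ℕ):ℤ) - 1 : ℤ) = (n - m + l - 4) + 2 by push_cast; ring]
  rw [show (-n + m + l - ((1:ℕ):ℤ) - 1 : ℤ) = (-n + m + l - 4) + 2 by push_cast; ring]
  rw [show (n - 1 + m - l - ((2:ℕ):ℤ) - 1 : ℤ) = n + m - l - 4 by push_cast; ring]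
  rw [show (n - 1 - m + l - ((2:ℕ):ℤ) - 1 : ℤ) = n - m + l - 4 by push_cast; ring]
  rw [show (-(n - 1) + m + l - ((2:ℕ):ℤ) - 1 : ℤ) = (-n + m + l - 4) + 2 by push_cast; ring]
  rw [ddfact_step _ hA, ddfact_step _ hB, ddfact_step _ hC]
  simp only [Sp, Pp]
  push_cast
  ring

set_option maxHeartbeats 4000000 in
lemma Grec1 (n m l : ℤ) (hpar : Odd (n + m + l + 1)) :
    G 1 (n+1) m l = m * G 1 n (m-1) l + l * G 1 n m (l-1) + 1 * G 0 n m l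
      - n * G 1 (n-1) m l := by
  rw [Int.odd_iff] at hpar
  have hA : Odd (n + m - l - 3) := by rw [Int.odd_iff]; omega
  have hB : Odd (n - m + l - 3) := by rw [Int.odd_iff]; omega
  have hC : Odd (-n + m + l - 3) := by rw [Int.odd_iff]; omega
  unfold G
  rw [show (n + 1 + m - l - ((1:ℕ):ℤ) - 1 : ℤ) = (n + m - l - 3) + 2 by push_cast; ring]
  rw [show (n + 1 - m + l - ((1:ℕ):ℤ) - 1 : ℤ) = (n - m + l - 3) + 2 by push_cast; ring]
  rw [show (-(n + 1) + m + l - ((1:ℕ):ℤ) - 1 : ℤ) = -n + m + l - 3 by push_cast; ring]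
  rw [show (n + (m - 1) - l - ((1:ℕ):ℤ) - 1 : ℤ) = n + m - l - 3 by push_cast; ring]
  rw [show (n - (m - 1) + l - ((1:ℕ):ℤ) - 1 : ℤ) = (n - m + l - 3) + 2 by push_cast; ring]
  rw [show (-n + (m - 1) + l - ((1:ℕ):ℤ) - 1 : ℤ) = -n + m + l - 3 by push_cast; ring]
  rw [show (n + m - (l - 1) - ((1:ℕ):ℤ) - 1 : ℤ) = (n + m - l - 3) + 2 by push_cast; ring]
  rw [show (n - m + (l - 1) - ((1:ℕ):ℤ) - 1 : ℤ) = n - m + l - 3 by push_cast; ring]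
  rw [show (-n + m + (l - 1) - ((1:ℕ):ℤ) - 1 : ℤ) = -n + m + l - 3 by push_cast; ring]
  rw [show (n + m - l - ((0:ℕ):ℤ) - 1 : ℤ) = (n + m - l - 3) + 2 by push_cast; ring]
  rw [show (n - m + l - ((0:ℕ):ℤ) - 1 : ℤ) = (n - m + l - 3) + 2 by push_cast; ring]
  rw [show (-n + m + l - ((0:ℕ):ℤ) - 1 : ℤ) = (-n + m + l - 3) + 2 by push_cast; ring]
  rw [show (n - 1 + m - l - ((1:ℕ):ℤ) - 1 : ℤ) = n + m - l - 3 by push_cast; ring]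
  rw [show (n - 1 - m + l - ((1:ℕ):ℤ) - 1 : ℤ) = n - m + l - 3 by push_cast; ring]
  rw [show (-(n - 1) + m + l - ((1:ℕ):ℤ) - 1 : ℤ) = (-n + m + l - 3) + 2 by push_cast; ring]
  rw [ddfact_step _ hA, ddfact_step _ hB, ddfact_step _ hC]
  simp only [Sp, Pp]
  push_cast
  ring

set_option maxHeartbeats 4000000 in
lemma Grec0 (n m l : ℤ) (hpar : Odd (n + m + l + 0)) :
    G 0 (n+1) m l = m * G 0 n (m-1) l + l * G 0 n m (l-1) + 0
      - n * G 0 (n-1) m l := by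
  rw [Int.odd_iff] at hpar
  have hA : Odd (n + m - l - 2) := by rw [Int.odd_iff]; omega
  have hB : Odd (n - m + l - 2) := by rw [Int.odd_iff]; omega
  have hC : Odd (-n + m + l - 2) := by rw [Int.odd_iff]; omega
  unfold G
  rw [show (n + 1 + m - l - ((0:ℕ):ℤ) - 1 : ℤ) = (n + m - l - 2) + 2 by push_cast; ring]
  rw [show (n + 1 - m + l - ((0:ℕ):ℤ) - 1 : ℤ) = (n - m + l - 2) + 2 by push_cast; ring]
  rw [show (-(n + 1) + m + l - ((0:ℕ):ℤ) - 1 : ℤ) = -n + m + l - 2 by push_cast; ring]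
  rw [show (n + (m - 1) - l - ((0:ℕ):ℤ) - 1 : ℤ) = n + m - l - 2 by push_cast; ring]
  rw [show (n - (m - 1) + l - ((0:ℕ):ℤ) - 1 : ℤ) = (n - m + l - 2) + 2 by push_cast; ring]
  rw [show (-n + (m - 1) + l - ((0:ℕ):ℤ) - 1 : ℤ) = -n + m + l - 2 by push_cast; ring]
  rw [show (n + m - (l - 1) - ((0:ℕ):ℤ) - 1 : ℤ) = (n + m - l - 2) + 2 by push_cast; ring]
  rw [show (n - m + (l - 1) - ((0:ℕ):ℤ) - 1 : ℤ) = n - m + l - 2 by push_cast; ring]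
  rw [show (-n + m + (l - 1) - ((0:ℕ):ℤ) - 1 : ℤ) = -n + m + l - 2 by push_cast; ring]
  rw [show (n - 1 + m - l - ((0:ℕ):ℤ) - 1 : ℤ) = n + m - l - 2 by push_cast; ring]
  rw [show (n - 1 - m + l - ((0:ℕ):ℤ) - 1 : ℤ) = n - m + l - 2 by push_cast; ring]
  rw [show (-(n - 1) + m + l - ((0:ℕ):ℤ) - 1 : ℤ) = (-n + m + l - 2) + 2 by push_cast; ring]
  rw [ddfact_step _ hA, ddfact_step _ hB, ddfact_step _ hC]
  simp only [Sp, Pp]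
  push_cast
  ring

lemma Spsym12 (k : ℕ) (a b c : ℝ) : Sp k a b c = Sp k b a c := by
  rcases k with _|_|_|_|k <;> simp only [Sp, Pp] <;> ring

lemma Spsym13 (k : ℕ) (a b c : ℝ) : Sp k a b c = Sp k c b a := by
  rcases k with _|_|_|_|k <;> simp only [Sp, Pp] <;> ring

lemma Gsym12 (k : ℕ) (n m l : ℤ) : G k n m l = G k m n l := by
  unfold G
  rw [Spsym12 k (n:ℝ) (m:ℝ) (l:ℝ),
    show (n + m - l - (k:ℤ) - 1 : ℤ) = m + n - l - (k:ℤ) - 1 by ring,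
    show (n - m + l - (k:ℤ) - 1 : ℤ) = -m + n + l - (k:ℤ) - 1 by ring,
    show (-n + m + l - (k:ℤ) - 1 : ℤ) = m - n + l - (k:ℤ) - 1 by ring]
  ring

lemma Gsym13 (k : ℕ) (n m l : ℤ) : G k n m l = G k l m n := by
  unfold G
  rw [Spsym13 k (n:ℝ) (m:ℝ) (l:ℝ),
    show (n + m - l - (k:ℤ) - 1 : ℤ) = -l + m + n - (k:ℤ) - 1 by ring,
    show (n - m + l - (k:ℤ) - 1 : ℤ) = l - m + n - (k:ℤ) - 1 by ring,
    show (-n + m + l - (k:ℤ) - 1 : ℤ) = l + m - n - (k:ℤ) - 1 by ring]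
  ring

set_option maxHeartbeats 1000000 in
lemma master : ∀ T n m l k : ℕ, n + m + l + k = T → k ≤ 3 → Even (n + m + l + k) →
    I n m l k = G k (n:ℤ) (m:ℤ) (l:ℤ) := by
  intro T
  induction T using Nat.strong_induction_on with
  | _ T IH =>
  intro n m l k hT hk hpar
  rw [Nat.even_iff] at hpar
  rcases n with _|p
  · rcases m with _|p
    · rcases l with _|p
      · -- n = m = l = 0
        interval_cases k
        · rw [Ibase]
          simp only [G, Sp]
          norm_num [ddfact_neg_one]
        · omega
        · have hv : I 0 0 0 2 = -1 := by
            rw [Isym14 0 0 0 2, show (2:ℕ) = 1 + 1 from rfl, Irec 1 0 0 0]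
            norm_num [Ibase]
          rw [hv]
          simp only [G, Sp, Pp]
          norm_num [ddfact_neg_three]
        · omega
      · -- n = m = 0, l = p+1
        rw [Isym13 0 0 (p+1) k, Irec p 0 0 k, Gsym13]
        have h3 : (k:ℝ) * I p 0 0 (k-1) = (k:ℝ) * G (k-1) (p:ℤ) 0 0 := by
          rcases k with _|q
          · simp
          · simp only [Nat.add_sub_cancel]
            rw [IH (p + 0 + 0 + q) (by omega) p 0 0 q rfl (by omega)
              (by rw [Nat.even_iff]; omega)]
            all_goals (push_cast; try ring)
        have h4 : (p:ℝ) * I (p-1) 0 0 k = (p:ℝ) * G k ((p:ℤ)-1) 0 0 := by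
          rcases p with _|q
          · simp
          · simp only [Nat.add_sub_cancel]
            rw [IH (q + 0 + 0 + k) (by omega) q 0 0 k rfl hk
              (by rw [Nat.even_iff]; omega)]
            all_goals (push_cast; try ring)
        rw [h3, h4]
        push_cast
        interval_cases k
        · have key := Grec0 (p:ℤ) 0 0 (by rw [Int.odd_iff]; omega)
          push_cast at key ⊢
          linear_combination -key
        · have key := Grec1 (p:ℤ) 0 0 (by rw [Int.odd_iff]; omega)
          push_cast at key ⊢
          simp only [show (1:ℕ)-1 = 0 from rfl] at *
          linear_combination -key
        · have key := Grec2 (p:ℤ) 0 0 (by rw [Int.odd_iff]; omega)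
          push_cast at key ⊢
          simp only [show (2:ℕ)-1 = 1 from rfl] at *
          linear_combination -key
        · have key := Grec3 (p:ℤ) 0 0 (by rw [Int.odd_iff]; omega)
          push_cast at key ⊢
          simp only [show (3:ℕ)-1 = 2 from rfl] at *
          linear_combination -key
    · -- n = 0, m = p+1
      rw [Isym12 0 (p+1) l k, Irec p 0 l k, Gsym12]
      have h2 : (l:ℝ) * I p 0 (l-1) k = (l:ℝ) * G k (p:ℤ) 0 ((l:ℤ)-1) := by
        rcases l with _|q
        · simp
        · simp only [Nat.add_sub_cancel]
          rw [IH (p + 0 + q + k) (by omega) p 0 q k rfl hk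
            (by rw [Nat.even_iff]; omega)]
          push_cast
          ring
      have h3 : (k:ℝ) * I p 0 l (k-1) = (k:ℝ) * G (k-1) (p:ℤ) 0 (l:ℤ) := by
        rcases k with _|q
        · simp
        · simp only [Nat.add_sub_cancel]
          rw [IH (p + 0 + l + q) (by omega) p 0 l q rfl (by omega)
            (by rw [Nat.even_iff]; omega)]
          push_cast
          ring
      have h4 : (p:ℝ) * I (p-1) 0 l k = (p:ℝ) * G k ((p:ℤ)-1) 0 (l:ℤ) := by
        rcases p with _|q
        · simp
        · simp only [Nat.add_sub_cancel]
          rw [IH (q + 0 + l + k) (by omega) q 0 l k rfl hk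
            (by rw [Nat.even_iff]; omega)]
          push_cast
          ring
      rw [h2, h3, h4]
      push_cast
      interval_cases k
      · have key := Grec0 (p:ℤ) 0 (l:ℤ) (by rw [Int.odd_iff]; omega)
        push_cast at key ⊢
        linear_combination -key
      · have key := Grec1 (p:ℤ) 0 (l:ℤ) (by rw [Int.odd_iff]; omega)
        push_cast at key ⊢
        simp only [show (1:ℕ)-1 = 0 from rfl] at *
        linear_combination -key
      · have key := Grec2 (p:ℤ) 0 (l:ℤ) (by rw [Int.odd_iff]; omega)
        push_cast at key ⊢
        simp only [show (2:ℕ)-1 = 1 from rfl] at *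
        linear_combination -key
      · have key := Grec3 (p:ℤ) 0 (l:ℤ) (by rw [Int.odd_iff]; omega)
        push_cast at key ⊢
        simp only [show (3:ℕ)-1 = 2 from rfl] at *
        linear_combination -key
  · -- n = p+1
    rw [Irec p m l k]
    have h1 : (m:ℝ) * I p (m-1) l k = (m:ℝ) * G k (p:ℤ) ((m:ℤ)-1) (l:ℤ) := by
      rcases m with _|q
      · simp
      · simp only [Nat.add_sub_cancel]
        rw [IH (p + q + l + k) (by omega) p q l k rfl hk
          (by rw [Nat.even_iff]; omega)]
        all_goals (push_cast; try ring)
    have h2 : (l:ℝ) * I p m (l-1) k = (l:ℝ) * G k (p:ℤ) (m:ℤ) ((l:ℤ)-1) := by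
      rcases l with _|q
      · simp
      · simp only [Nat.add_sub_cancel]
        rw [IH (p + m + q + k) (by omega) p m q k rfl hk
          (by rw [Nat.even_iff]; omega)]
        all_goals (push_cast; try ring)
    have h3 : (k:ℝ) * I p m l (k-1) = (k:ℝ) * G (k-1) (p:ℤ) (m:ℤ) (l:ℤ) := by
      rcases k with _|q
      · simp
      · simp only [Nat.add_sub_cancel]
        rw [IH (p + m + l + q) (by omega) p m l q rfl (by omega)
          (by rw [Nat.even_iff]; omega)]
        all_goals (push_cast; try ring)
    have h4 : (p:ℝ) * I (p-1) m l k = (p:ℝ) * G k ((p:ℤ)-1) (m:ℤ) (l:ℤ) := by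
      rcases p with _|q
      · simp
      · simp only [Nat.add_sub_cancel]
        rw [IH (q + m + l + k) (by omega) q m l k rfl hk
          (by rw [Nat.even_iff]; omega)]
        all_goals (push_cast; try ring)
    rw [h1, h2, h3, h4]
    push_cast
    interval_cases k
    · have key := Grec0 (p:ℤ) (m:ℤ) (l:ℤ) (by rw [Int.odd_iff]; omega)
      push_cast at key ⊢
      linear_combination -key
    · have key := Grec1 (p:ℤ) (m:ℤ) (l:ℤ) (by rw [Int.odd_iff]; omega)
      push_cast at key ⊢
      simp only [show (1:ℕ)-1 = 0 from rfl] at *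
      linear_combination -key
    · have key := Grec2 (p:ℤ) (m:ℤ) (l:ℤ) (by rw [Int.odd_iff]; omega)
      push_cast at key ⊢
      simp only [show (2:ℕ)-1 = 1 from rfl] at *
      linear_combination -key
    · have key := Grec3 (p:ℤ) (m:ℤ) (l:ℤ) (by rw [Int.odd_iff]; omega)
      push_cast at key ⊢
      simp only [show (3:ℕ)-1 = 2 from rfl] at *
      linear_combination -key

theorem I4_three_eq (n m l : ℕ) (h : Odd (n + m + l))
    (P₁ : ℝ)
    (hP₁ : P₁ = (n : ℝ) ^ 2 + (m : ℝ) ^ 2 + (l : ℝ) ^ 2 - 2 * n * m - 2 * n * l - 2 * m * l) :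
    I n m l 3 =
      -(ddfact ((n : ℤ) + m - l - 4) * ddfact ((n : ℤ) - m + l - 4) *
          ddfact (-(n : ℤ) + m + l - 4) *
        (P₁ ^ 3 - 8 * P₁ ^ 2 + (16 - 48 * n * m * l) * P₁ -
          64 * n * m * l * ((n : ℝ) + m + l - 3))) := by
  have hpar : Even (n + m + l + 3) := by
    rw [Nat.odd_iff] at h
    rw [Nat.even_iff]
    omega
  rw [master (n + m + l + 3) n m l 3 rfl (by norm_num) hpar]
  subst hP₁
  unfold G
  rw [show ((n:ℤ) + (m:ℤ) - (l:ℤ) - ((3:ℕ):ℤ) - 1) = (n:ℤ) + m - l - 4 by push_cast; ring,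
    show ((n:ℤ) - (m:ℤ) + (l:ℤ) - ((3:ℕ):ℤ) - 1) = (n:ℤ) - m + l - 4 by push_cast; ring,
    show (-(n:ℤ) + (m:ℤ) + (l:ℤ) - ((3:ℕ):ℤ) - 1) = -(n:ℤ) + m + l - 4 by push_cast; ring]
  simp only [Sp, Pp]
  push_cast
  ring
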